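/- arXiv:1504.02000 — 2 statements merged into one kernel-verified Lean document; each statement's English description precedes it below -/
import Mathlib

section
/- Let 0 < b < a and let f : ℝ → ℝ be continuous on [b,a]. Suppose there is a sequence (Z_m) of real numbers with 0 < Z_m < b for all m and Z_m → b, such that ∫_b^a f(t)·(t − b + Z_m)^{−1/2} dt = 0 for every m. Then f(t) = 0 for all t ∈ [b,a]. -/
open MeasureTheory intervalIntegral

section AuxStmt0

open Complex Set Metric Real

lemma key_contOn (a b : ℝ) (hba : b < a)
    (f : ℝ → ℝ) (hf : ContinuousOn f (Set.Icc b a))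
    (c z : ℂ) (hz : ∀ t ∈ Set.Icc b a, ((t : ℂ) - b + z) ∈ Complex.slitPlane) :
    ContinuousOn (fun t : ℝ => (f t : ℂ) * ((t : ℂ) - b + z) ^ c) (Set.Icc b a) := by
  refine (Complex.continuous_ofReal.comp_continuousOn hf).mul ?_
  exact (((Complex.continuous_ofReal.continuousOn.sub continuousOn_const).add
    continuousOn_const).cpow_const hz)

lemma key_deriv (a b : ℝ) (hb : 0 < b) (hba : b < a)
    (f : ℝ → ℝ) (hf : ContinuousOn f (Set.Icc b a))
    (c : ℂ) (hc : c.re ≤ 1) (z0 : ℂ) (hz0 : 0 < z0.re) :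
    HasDerivAt (fun z : ℂ => ∫ t in b..a, (f t : ℂ) * ((t : ℂ) - b + z) ^ c)
      (∫ t in b..a, (f t : ℂ) * (c * ((t : ℂ) - b + z0) ^ (c - 1))) z0 := by
  set ε : ℝ := z0.re / 2 with hε
  have ε_pos : 0 < ε := by positivity
  obtain ⟨M, hM⟩ := IsCompact.exists_bound_of_continuousOn isCompact_Icc hf
  -- the real-part lower bound
  have hre : ∀ z ∈ ball z0 ε, ∀ t ∈ Set.Icc b a, ε ≤ ((t : ℂ) - b + z).re := by
    intro z hz t ht
    have h1 : |z.re - z0.re| ≤ ‖z - z0‖ := by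
      simpa using Complex.abs_re_le_norm (z - z0)
    have h2 : ‖z - z0‖ < ε := by simpa [Complex.dist_eq] using hz
    have : z0.re - ε ≤ z.re := by
      have := abs_sub_le_iff.mp (h1.trans h2.le)
      linarith [this.2]
    have hre' : ((t : ℂ) - b + z).re = (t - b) + z.re := by simp
    have : 0 ≤ t - b := by linarith [ht.1]
    rw [hre']
    have : z0.re - ε = ε := by rw [hε]; ring
    linarith
  have hslit : ∀ z ∈ ball z0 ε, ∀ t ∈ Set.Icc b a, ((t : ℂ) - b + z) ∈ Complex.slitPlane := by
    intro z hz t ht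
    exact Complex.mem_slitPlane_iff.mpr (Or.inl (lt_of_lt_of_le ε_pos (hre z hz t ht)))
  have hsub : Set.uIoc b a ⊆ Set.Icc b a := by
    rw [Set.uIoc_of_le hba.le]; exact Set.Ioc_subset_Icc_self
  have hz0ball : z0 ∈ ball z0 ε := mem_ball_self ε_pos
  -- norm bound for the derivative integrand
  set B : ℝ := M * (‖c‖ * (ε ^ (c.re - 1) * Real.exp (π * |c.im|))) with hB
  have hbound : ∀ z ∈ ball z0 ε, ∀ t ∈ Set.Icc b a,
      ‖(f t : ℂ) * (c * ((t : ℂ) - b + z) ^ (c - 1))‖ ≤ B := by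
    intro z hz t ht
    set w : ℂ := (t : ℂ) - b + z with hw
    have hrew : ε ≤ w.re := hre z hz t ht
    have hwabs : ε ≤ ‖w‖ := hrew.trans (Complex.re_le_norm w)
    have hwne : w ≠ 0 := by
      intro h0
      rw [h0] at hrew; simp at hrew; linarith
    have h1 : ‖w ^ (c - 1)‖ =
        ‖w‖ ^ (c - 1).re / Real.exp (Complex.arg w * (c - 1).im) :=
      Complex.norm_cpow_of_ne_zero hwne _
    have h2 : ‖w‖ ^ (c.re - 1) ≤ ε ^ (c.re - 1) :=
      Real.rpow_le_rpow_of_nonpos ε_pos hwabs (by linarith)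
    have h3 : Real.exp (-(Complex.arg w * c.im)) ≤ Real.exp (π * |c.im|) := by
      apply Real.exp_le_exp.2
      calc -(Complex.arg w * c.im) ≤ |Complex.arg w * c.im| := neg_le_abs _
        _ = |Complex.arg w| * |c.im| := abs_mul _ _
        _ ≤ π * |c.im| := by
            have := Complex.abs_arg_le_pi w
            exact mul_le_mul_of_nonneg_right this (abs_nonneg _)
    have h4 : ‖w ^ (c - 1)‖ ≤ ε ^ (c.re - 1) * Real.exp (π * |c.im|) := by
      rw [h1, div_eq_mul_inv, ← Real.exp_neg]
      have hsimp : (c - 1).re = c.re - 1 := by simp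
      have hsimp2 : (c - 1).im = c.im := by simp
      rw [hsimp, hsimp2]
      exact mul_le_mul h2 h3 (Real.exp_pos _).le (Real.rpow_nonneg ε_pos.le _)
    have hft : ‖(f t : ℂ)‖ ≤ M := by
      rw [Complex.norm_real]; exact hM t ht
    calc ‖(f t : ℂ) * (c * w ^ (c - 1))‖
        = ‖(f t : ℂ)‖ * (‖c‖ * ‖w ^ (c - 1)‖) := by
          simp [norm_mul]
      _ ≤ M * (‖c‖ * (ε ^ (c.re - 1) * Real.exp (π * |c.im|))) := by
          apply mul_le_mul hft ?_ (by positivity) ((norm_nonneg _).trans hft)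
          exact mul_le_mul_of_nonneg_left h4 (norm_nonneg c)
      _ = B := rfl
  have main := intervalIntegral.hasDerivAt_integral_of_dominated_loc_of_deriv_le
    (F := fun z t => (f t : ℂ) * ((t : ℂ) - b + z) ^ c)
    (F' := fun z t => (f t : ℂ) * (c * ((t : ℂ) - b + z) ^ (c - 1)))
    (bound := fun _ => B) (μ := volume) (a := b) (b := a) (x₀ := z0) (ball_mem_nhds z0 ε_pos)
    ?_ ?_ ?_ ?_ ?_ ?_
  · exact main.2
  · -- measurability of F z
    filter_upwards [ball_mem_nhds z0 ε_pos] with z hz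
    exact ((key_contOn a b hba f hf c z (hslit z hz)).mono hsub).aestronglyMeasurable
      measurableSet_uIoc
  · -- integrability of F z0
    apply ContinuousOn.intervalIntegrable
    rw [Set.uIcc_of_le hba.le]
    exact key_contOn a b hba f hf c z0 (hslit z0 hz0ball)
  · -- measurability of F' z0
    apply ContinuousOn.aestronglyMeasurable ?_ measurableSet_uIoc
    apply ContinuousOn.mono ?_ hsub
    refine (Complex.continuous_ofReal.comp_continuousOn hf).mul (continuousOn_const.mul ?_)
    exact (((Complex.continuous_ofReal.continuousOn.sub continuousOn_const).add
      continuousOn_const).cpow_const (hslit z0 hz0ball))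
  · -- bound
    refine Filter.Eventually.of_forall fun t ht z hz => hbound z hz t (hsub ht)
  · exact intervalIntegrable_const
  · -- differentiability
    refine Filter.Eventually.of_forall fun t ht z hz => ?_
    have hd : HasDerivAt (fun z : ℂ => (t : ℂ) - b + z) 1 z := by
      simpa using (hasDerivAt_id z).const_add ((t : ℂ) - b)
    have := (hd.cpow_const (c := c) (hslit z hz t (hsub ht))).const_mul (f t : ℂ)
    simpa [mul_one] using this

lemma vanish_base (a b : ℝ) (hb : 0 < b) (hba : b < a)
    (f : ℝ → ℝ) (hf : ContinuousOn f (Set.Icc b a))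
    (Z : ℕ → ℝ) (hZpos : ∀ m, 0 < Z m) (hZb : ∀ m, Z m < b)
    (hZlim : Filter.Tendsto Z Filter.atTop (nhds b))
    (hint : ∀ m, (∫ t in b..a, f t * (t - b + Z m) ^ (-(1/2) : ℝ)) = 0) :
    ∀ z : ℂ, 0 < z.re →
      (∫ t in b..a, (f t : ℂ) * ((t : ℂ) - b + z) ^ (-(1/2) : ℂ)) = 0 := by
  set F : ℂ → ℂ := fun z => ∫ t in b..a, (f t : ℂ) * ((t : ℂ) - b + z) ^ (-(1/2) : ℂ) with hF
  set U : Set ℂ := {z : ℂ | 0 < z.re} with hU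
  have hUopen : IsOpen U := isOpen_lt continuous_const Complex.continuous_re
  have hFanal : AnalyticOnNhd ℂ F U := by
    apply DifferentiableOn.analyticOnNhd ?_ hUopen
    intro z hz
    exact (key_deriv a b hb hba f hf (-(1/2) : ℂ) (by norm_num) z hz).differentiableAt.differentiableWithinAt
  have hFZ : ∀ m, F ((Z m : ℝ) : ℂ) = 0 := by
    intro m
    have hcong : ∀ t ∈ Set.uIcc b a,
        (f t : ℂ) * ((t : ℂ) - b + (Z m : ℂ)) ^ (-(1/2) : ℂ)
          = ((f t * (t - b + Z m) ^ (-(1/2) : ℝ) : ℝ) : ℂ) := by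
      intro t ht
      rw [Set.uIcc_of_le hba.le] at ht
      have hpos : (0:ℝ) ≤ t - b + Z m := by
        have := ht.1; have := hZpos m; linarith
      rw [Complex.ofReal_mul, Complex.ofReal_cpow hpos]
      push_cast
      ring_nf
    rw [hF]
    simp only []
    rw [intervalIntegral.integral_congr hcong, intervalIntegral.integral_ofReal, hint m]
    simp
  have hb' : ((b : ℝ) : ℂ) ∈ U := by simp [hU, hb]
  have hfreq : ∃ᶠ z in nhdsWithin ((b:ℝ):ℂ) {((b:ℝ):ℂ)}ᶜ, F z = 0 := by
    have htend : Filter.Tendsto (fun m => ((Z m : ℝ) : ℂ)) Filter.atTop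
        (nhdsWithin ((b:ℝ):ℂ) {((b:ℝ):ℂ)}ᶜ) := by
      apply tendsto_nhdsWithin_of_tendsto_nhds_of_eventually_within
      · exact (Complex.continuous_ofReal.tendsto b).comp hZlim
      · refine Filter.Eventually.of_forall fun m => ?_
        simp only [Set.mem_compl_iff, Set.mem_singleton_iff]
        exact fun h => (hZb m).ne (by exact_mod_cast h)
    exact htend.frequently (Filter.Frequently.of_forall hFZ)
  have := hFanal.eqOn_zero_of_preconnected_of_frequently_eq_zero
    (convex_halfSpace_re_gt 0).isPreconnected hb' hfreq
  intro z hz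
  exact this hz

lemma vanish_all (a b : ℝ) (hb : 0 < b) (hba : b < a)
    (f : ℝ → ℝ) (hf : ContinuousOn f (Set.Icc b a))
    (h0 : ∀ z : ℂ, 0 < z.re →
      (∫ t in b..a, (f t : ℂ) * ((t : ℂ) - b + z) ^ (-(1/2) : ℂ)) = 0) :
    ∀ (k : ℕ) (z : ℂ), 0 < z.re →
      (∫ t in b..a, (f t : ℂ) * ((t : ℂ) - b + z) ^ (-(1/2) - k : ℂ)) = 0 := by
  intro k
  induction k with
  | zero => simpa using h0
  | succ k ih =>
    intro z0 hz0
    set c : ℂ := -(1/2) - k with hc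
    have hcre : c.re ≤ 1 := by
      rw [hc]; simp [Complex.sub_re]; linarith [Nat.cast_nonneg (α := ℝ) k]
    have hd := key_deriv a b hb hba f hf c hcre z0 hz0
    have hzero : HasDerivAt (fun z : ℂ => ∫ t in b..a, (f t : ℂ) * ((t : ℂ) - b + z) ^ c) 0 z0 := by
      have hev : (fun z : ℂ => ∫ t in b..a, (f t : ℂ) * ((t : ℂ) - b + z) ^ c)
          =ᶠ[nhds z0] fun _ => (0:ℂ) := by
        filter_upwards [(isOpen_lt continuous_const Complex.continuous_re).mem_nhds hz0] with z hz
        exact ih z hz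
      exact (hasDerivAt_const z0 (0:ℂ)).congr_of_eventuallyEq hev
    have heq : (∫ t in b..a, (f t : ℂ) * (c * ((t : ℂ) - b + z0) ^ (c - 1))) = 0 :=
      hd.unique hzero
    have heq2 : c * (∫ t in b..a, (f t : ℂ) * ((t : ℂ) - b + z0) ^ (c - 1)) = 0 := by
      rw [← intervalIntegral.integral_const_mul, ← heq]
      apply intervalIntegral.integral_congr
      intro t _; ring
    have hcne : c ≠ 0 := by
      rw [hc]
      intro h
      have := congrArg Complex.re h
      simp [Complex.sub_re] at this
      linarith [Nat.cast_nonneg (α := ℝ) k]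
    have := (mul_eq_zero.mp heq2).resolve_left hcne
    rw [← this]
    apply intervalIntegral.integral_congr
    intro t _
    congr 1
    rw [hc]
    push_cast
    ring

lemma moments (a b : ℝ) (hb : 0 < b) (hba : b < a)
    (f : ℝ → ℝ) (hf : ContinuousOn f (Set.Icc b a))
    (hall : ∀ (k : ℕ) (z : ℂ), 0 < z.re →
      (∫ t in b..a, (f t : ℂ) * ((t : ℂ) - b + z) ^ (-(1/2) - k : ℂ)) = 0) :
    ∀ k : ℕ, (∫ t in b..a, f t * t ^ (-(1/2) - (k:ℝ) : ℝ)) = 0 := by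
  intro k
  have h := hall k ((b:ℝ):ℂ) (by simpa using hb)
  have hcong : ∀ t ∈ Set.uIcc b a,
      (f t : ℂ) * ((t : ℂ) - b + ((b:ℝ):ℂ)) ^ (-(1/2) - k : ℂ)
        = ((f t * t ^ (-(1/2) - (k:ℝ) : ℝ) : ℝ) : ℂ) := by
    intro t ht
    rw [Set.uIcc_of_le hba.le] at ht
    have ht0 : (0:ℝ) ≤ t := le_trans hb.le ht.1
    have hbase : (t : ℂ) - b + ((b:ℝ):ℂ) = ((t:ℝ):ℂ) := by ring
    rw [hbase, Complex.ofReal_mul, Complex.ofReal_cpow ht0]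
    push_cast
    ring_nf
  rw [intervalIntegral.integral_congr hcong, intervalIntegral.integral_ofReal] at h
  exact_mod_cast h

theorem stmt_0' (a b : ℝ) (hb : 0 < b) (hba : b < a)
    (f : ℝ → ℝ) (hf : ContinuousOn f (Set.Icc b a))
    (hmom : ∀ k : ℕ, (∫ t in b..a, f t * t ^ (-(1/2) - (k:ℝ) : ℝ)) = 0) :
    ∀ t ∈ Set.Icc b a, f t = 0 := by
  set h : ℝ → ℝ := fun t => f t * t ^ (-(1/2) : ℝ) with hh
  have hxne : ∀ t ∈ Set.Icc b a, t ≠ 0 := fun t ht => (hb.trans_le ht.1).ne'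
  have hhcont : ContinuousOn h (Set.Icc b a) :=
    hf.mul (ContinuousOn.rpow_const continuousOn_id (fun t ht => Or.inl (hxne t ht)))
  -- key integral facts: ∫ h t * (t⁻¹)^k = 0
  have hmono : ∀ k : ℕ, (∫ t in b..a, h t * (t⁻¹) ^ k) = 0 := by
    intro k
    rw [← hmom k]
    apply intervalIntegral.integral_congr
    intro t ht
    rw [Set.uIcc_of_le hba.le] at ht
    have ht0 : (0:ℝ) < t := hb.trans_le ht.1
    rw [hh]
    simp only []
    rw [← Real.rpow_natCast t⁻¹ k, Real.inv_rpow ht0.le, ← Real.rpow_neg ht0.le,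
      mul_assoc, ← Real.rpow_add ht0]
    norm_num
    left; ring_nf
  -- Stone-Weierstrass setup
  set X := Set.Icc b a with hX
  set φ : C(X, ℝ) := ⟨fun x => (x:ℝ)⁻¹,
    continuous_subtype_val.inv₀ (fun x => hxne x.1 x.2)⟩ with hφ
  set hC : C(X, ℝ) := ⟨X.restrict h, hhcont.restrict⟩ with hhC
  obtain ⟨M, hM⟩ := isCompact_Icc.exists_bound_of_continuousOn hhcont
  have hM0 : 0 ≤ M := le_trans (norm_nonneg _) (hM b ⟨le_refl b, hba.le⟩)
  set proj : ℝ → X := fun t => Set.projIcc b a hba.le t with hproj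
  have hprojmem : ∀ t ∈ Set.Icc b a, ((proj t : X) : ℝ) = t := by
    intro t ht
    rw [hproj]
    simp only [Set.projIcc_of_mem hba.le ht]
  set L : C(X, ℝ) → ℝ := fun g => ∫ t in b..a, h t * g (proj t) with hL
  have hgint : ∀ g : C(X,ℝ), IntervalIntegrable (fun t => h t * g (proj t)) volume b a := by
    intro g
    apply ContinuousOn.intervalIntegrable
    rw [Set.uIcc_of_le hba.le]
    exact hhcont.mul ((g.continuous.comp (continuous_projIcc)).continuousOn)
  have hLlip : LipschitzWith (Real.toNNReal (M * (a - b))) L := by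
    apply LipschitzWith.of_dist_le_mul
    intro g₁ g₂
    have hsub' : L g₁ - L g₂ = ∫ t in b..a, h t * (g₁ (proj t) - g₂ (proj t)) := by
      rw [hL]
      simp only []
      rw [← intervalIntegral.integral_sub (hgint g₁) (hgint g₂)]
      congr 1
      ext t
      ring
    have hbd : ∀ t ∈ Set.uIoc b a, ‖h t * (g₁ (proj t) - g₂ (proj t))‖ ≤ M * dist g₁ g₂ := by
      intro t ht
      rw [Set.uIoc_of_le hba.le] at ht
      have htI : t ∈ Set.Icc b a := ⟨ht.1.le, ht.2⟩
      rw [norm_mul]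
      apply mul_le_mul (hM t htI) ?_ (norm_nonneg _) hM0
      calc ‖g₁ (proj t) - g₂ (proj t)‖ = dist (g₁ (proj t)) (g₂ (proj t)) := (dist_eq_norm _ _).symm
        _ ≤ dist g₁ g₂ := ContinuousMap.dist_apply_le_dist _
    have hest := intervalIntegral.norm_integral_le_of_norm_le_const hbd
    rw [dist_eq_norm, hsub']
    calc ‖∫ t in b..a, h t * (g₁ (proj t) - g₂ (proj t))‖
        ≤ M * dist g₁ g₂ * |a - b| := hest
      _ = (Real.toNNReal (M * (a - b)) : ℝ) * dist g₁ g₂ := by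
          rw [Real.coe_toNNReal _ (by nlinarith [dist_nonneg (x := g₁) (y := g₂)])]
          rw [abs_of_pos (by linarith)]
          ring
  have hLcont : Continuous L := hLlip.continuous
  have hLpow : ∀ k : ℕ, L (φ ^ k) = 0 := by
    intro k
    rw [hL]
    simp only []
    rw [← hmono k]
    apply intervalIntegral.integral_congr
    intro t ht
    rw [Set.uIcc_of_le hba.le] at ht
    congr 1
    rw [hφ]
    simp only [ContinuousMap.coe_pow, Pi.pow_apply, ContinuousMap.coe_mk]
    rw [hprojmem t ht]
  set A : Subalgebra ℝ C(X, ℝ) := Algebra.adjoin ℝ {φ} with hA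
  have hLadj : ∀ g ∈ A, L g = 0 := by
    intro g hg
    rw [hA, Algebra.adjoin_singleton_eq_range_aeval] at hg
    obtain ⟨p, rfl⟩ := hg
    show L (Polynomial.aeval φ p) = 0
    induction p using Polynomial.induction_on' with
    | add p q hp hq =>
      rw [map_add]
      have : L (Polynomial.aeval φ p + Polynomial.aeval φ q)
          = L (Polynomial.aeval φ p) + L (Polynomial.aeval φ q) := by
        rw [hL]
        simp only []
        rw [← intervalIntegral.integral_add (hgint _) (hgint _)]
        congr 1
        ext t
        simp only [ContinuousMap.add_apply]
        ring
      rw [this, hp, hq, add_zero]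
    | monomial n r =>
      rw [Polynomial.aeval_monomial]
      have heq : (fun t => h t * ((algebraMap ℝ C(X,ℝ) r * φ ^ n) (proj t)))
          = fun t => r * (h t * (φ ^ n) (proj t)) := by
        ext t
        have har : ((algebraMap ℝ C(X,ℝ) r) (proj t)) = r := by
          rw [algebraMap_apply, smul_eq_mul, mul_one]
        simp only [ContinuousMap.mul_apply, har]
        ring
      show (∫ t in b..a, h t * ((algebraMap ℝ C(X,ℝ) r * φ ^ n) (proj t))) = 0
      rw [heq, intervalIntegral.integral_const_mul]
      have := hLpow n
      rw [hL] at this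
      simp only [] at this
      rw [this, mul_zero]
  have hsep : A.SeparatesPoints := by
    intro x y hxy
    refine ⟨(fun g : C(X,ℝ) => (g : X → ℝ)) φ, ⟨φ, Algebra.subset_adjoin (Set.mem_singleton φ), rfl⟩, ?_⟩
    rw [hφ]
    simp only [ContinuousMap.coe_mk]
    have hxv : (x : ℝ) ≠ (y : ℝ) := fun hc => hxy (Subtype.ext hc)
    exact fun hc => hxv (inv_injective hc)
  have hdense := ContinuousMap.subalgebra_topologicalClosure_eq_top_of_separatesPoints A hsep
  have hclo : hC ∈ closure (A : Set C(X,ℝ)) := by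
    rw [← Subalgebra.topologicalClosure_coe, hdense]
    simp
  have hLhC : L hC = 0 := by
    have hcl : closure (A : Set C(X,ℝ)) ⊆ L ⁻¹' {0} :=
      closure_minimal (fun g hg => hLadj g hg) (isClosed_singleton.preimage hLcont)
    exact hcl hclo
  have hint2 : (∫ t in b..a, h t * h t) = 0 := by
    rw [← hLhC, hL]
    simp only []
    apply intervalIntegral.integral_congr
    intro t ht
    rw [Set.uIcc_of_le hba.le] at ht
    congr 1
    rw [hhC]
    simp only [ContinuousMap.coe_mk, Set.restrict_apply]
    change h t * h t = h t * h ((proj t : X) : ℝ)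
    rw [hprojmem t ht]
  have hzero : ∀ t ∈ Set.Icc b a, h t = 0 := by
    by_contra hcon
    push_neg at hcon
    obtain ⟨t0, ht0, hne⟩ := hcon
    have hpos := intervalIntegral.integral_pos hba (hhcont.mul hhcont)
      (fun x _ => mul_self_nonneg (h x)) ⟨t0, ht0, mul_self_pos.mpr hne⟩
    simp only [Pi.mul_apply, hint2] at hpos
    exact lt_irrefl 0 hpos
  intro t ht
  have hz := hzero t ht
  have hrp : t ^ (-(1/2):ℝ) ≠ 0 := (Real.rpow_pos_of_pos (hb.trans_le ht.1) _).ne'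
  rw [hh] at hz
  simp only [] at hz
  exact (mul_eq_zero.mp hz).resolve_right hrp

end AuxStmt0

/-- If `f` is continuous on `[b,a]` (with `0 < b < a`) and the Abel-type
integrals `∫_b^a f(t) (t - b + Z_m)^{-1/2} dt` vanish along a sequence `Z_m ∈ (0,b)` with
`Z_m → b`, then `f ≡ 0` on `[b,a]`. -/
theorem stmt_0 (a b : ℝ) (hb : 0 < b) (hba : b < a)
    (f : ℝ → ℝ) (hf : ContinuousOn f (Set.Icc b a))
    (Z : ℕ → ℝ) (hZpos : ∀ m, 0 < Z m) (hZb : ∀ m, Z m < b)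
    (hZlim : Filter.Tendsto Z Filter.atTop (nhds b))
    (hint : ∀ m, (∫ t in b..a, f t * (t - b + Z m) ^ (-(1/2) : ℝ)) = 0) :
    ∀ t ∈ Set.Icc b a, f t = 0 := by
  have h0 := vanish_base a b hb hba f hf Z hZpos hZb hZlim hint
  have hall := vanish_all a b hb hba f hf h0
  have hmom := moments a b hb hba f hf hall
  exact stmt_0' a b hb hba f hf hmom
end

section
/- Let c < d be real numbers and let μ and ν be finite Borel measures on ℝ whose supports are contained in [c,d] (i.e. μ and ν give measure zero to the complement of [c,d]). If ∫_ℝ √(max(E − x, 0)) dμ(x) = ∫_ℝ √(max(E − x, 0)) dν(x) for every E ∈ ℝ, then μ = ν. -/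
open MeasureTheory

section Stmt5Aux

open Real Set Filter
open scoped ENNReal Topology

/-- The Laplace transform of the half-power kernel. -/
noncomputable def stmt5absC (s : ℝ) : ℝ≥0∞ :=
  ∫⁻ t : ℝ, ENNReal.ofReal (Real.exp (-s * t) * Real.sqrt (max t 0))

lemma stmt5absC_ne_top {s : ℝ} (hs : 0 < s) : stmt5absC s ≠ ∞ := by
  have hint : Integrable (fun t : ℝ => Real.exp (-s * t) * Real.sqrt (max t 0)) := by
    rw [← integrableOn_univ, ← Iic_union_Ioi (a := (0:ℝ))]
    apply IntegrableOn.union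
    · apply (integrableOn_zero (ε' := ℝ)).congr_fun ?_ measurableSet_Iic
      intro t ht
      simp only [mem_Iic] at ht
      simp [max_eq_right ht, Real.sqrt_eq_zero']
    · have := integrableOn_rpow_mul_exp_neg_mul_rpow (p := 1) (s := 1/2) (b := s)
        (by norm_num) one_pos hs
      apply this.congr_fun ?_ measurableSet_Ioi
      intro t ht
      simp only [mem_Ioi] at ht
      simp only [Real.rpow_one]
      rw [max_eq_left ht.le, mul_comm, Real.sqrt_eq_rpow]
  have := hint.2
  rw [hasFiniteIntegral_iff_ofReal (Eventually.of_forall fun t => by positivity)] at this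
  exact this.ne

lemma stmt5absC_ne_zero {s : ℝ} (hs : 0 < s) : stmt5absC s ≠ 0 := by
  have hle : ENNReal.ofReal (Real.exp (-s * 2)) * volume (Ioc (1:ℝ) 2) ≤ stmt5absC s := by
    calc ENNReal.ofReal (Real.exp (-s * 2)) * volume (Ioc (1:ℝ) 2)
        = ∫⁻ _ in Ioc (1:ℝ) 2, ENNReal.ofReal (Real.exp (-s * 2)) := by
          rw [setLIntegral_const]
      _ ≤ ∫⁻ t in Ioc (1:ℝ) 2, ENNReal.ofReal (Real.exp (-s * t) * Real.sqrt (max t 0)) := by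
          apply setLIntegral_mono (by fun_prop) (fun t ht => ?_)
          apply ENNReal.ofReal_le_ofReal
          have h1 : (1:ℝ) ≤ t := ht.1.le
          have h2 : t ≤ 2 := ht.2
          have hsq : (1:ℝ) ≤ Real.sqrt (max t 0) := by
            rw [max_eq_left (by linarith)]
            exact Real.one_le_sqrt.mpr h1
          calc Real.exp (-s * 2) ≤ Real.exp (-s * t) := by
                apply Real.exp_le_exp.mpr; nlinarith
            _ = Real.exp (-s * t) * 1 := (mul_one _).symm
            _ ≤ Real.exp (-s * t) * Real.sqrt (max t 0) := by
                exact mul_le_mul_of_nonneg_left hsq (Real.exp_nonneg _)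
      _ ≤ stmt5absC s := setLIntegral_le_lintegral _ _
  intro h0
  rw [h0] at hle
  simp only [le_zero_iff, mul_eq_zero] at hle
  rcases hle with h | h
  · rw [ENNReal.ofReal_eq_zero] at h
    linarith [Real.exp_pos (-s * 2)]
  · rw [Real.volume_Ioc] at h
    rw [ENNReal.ofReal_eq_zero] at h
    linarith

lemma stmt5kernel_eq (s x : ℝ) :
    ∫⁻ E : ℝ, ENNReal.ofReal (Real.exp (-s * E) * Real.sqrt (max (E - x) 0)) =
      ENNReal.ofReal (Real.exp (-s * x)) * stmt5absC s := by
  have key := lintegral_add_right_eq_self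
    (μ := (volume : Measure ℝ))
    (fun E => ENNReal.ofReal (Real.exp (-s * E) * Real.sqrt (max (E - x) 0))) x
  rw [← key, stmt5absC, ← lintegral_const_mul' _ _ ENNReal.ofReal_ne_top]
  apply lintegral_congr (fun t => ?_)
  simp only [add_sub_cancel_right]
  rw [← ENNReal.ofReal_mul (Real.exp_nonneg _), ← mul_assoc, ← Real.exp_add]
  ring_nf

lemma stmt5ae_mem_Icc {c d : ℝ} (μ : Measure ℝ) (hμ : μ (Set.Icc c d)ᶜ = 0) :
    ∀ᵐ x ∂μ, x ∈ Set.Icc c d := by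
  rw [MeasureTheory.ae_iff]
  exact hμ

lemma stmt5supp_integrable {c d : ℝ} (μ : Measure ℝ) [IsFiniteMeasure μ]
    (hμ : μ (Set.Icc c d)ᶜ = 0) {g : ℝ → ℝ} (hg : Continuous g) : Integrable g μ := by
  have hres : μ.restrict (Set.Icc c d) = μ :=
    Measure.restrict_eq_self_of_ae_mem (stmt5ae_mem_Icc μ hμ)
  rw [← hres]
  exact hg.continuousOn.integrableOn_compact isCompact_Icc

lemma stmt5laplace_step {c d : ℝ} (μ : Measure ℝ) [IsFiniteMeasure μ]
    (hμ : μ (Set.Icc c d)ᶜ = 0) (s : ℝ) :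
    (∫⁻ x, ENNReal.ofReal (Real.exp (-s * x)) ∂μ) * stmt5absC s =
      ∫⁻ E : ℝ, ENNReal.ofReal (Real.exp (-s * E)) *
        ENNReal.ofReal (∫ x, Real.sqrt (max (E - x) 0) ∂μ) := by
  have hmeas : Measurable fun x : ℝ => ENNReal.ofReal (Real.exp (-s * x)) := by fun_prop
  rw [← lintegral_mul_const _ hmeas]
  simp_rw [← stmt5kernel_eq s]
  rw [lintegral_lintegral_swap (by fun_prop)]
  apply lintegral_congr (fun E => ?_)
  calc ∫⁻ x, ENNReal.ofReal (Real.exp (-s * E) * Real.sqrt (max (E - x) 0)) ∂μ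
      = ∫⁻ x, ENNReal.ofReal (Real.exp (-s * E)) *
          ENNReal.ofReal (Real.sqrt (max (E - x) 0)) ∂μ := by
        apply lintegral_congr (fun x => ?_)
        rw [← ENNReal.ofReal_mul (Real.exp_nonneg _)]
    _ = ENNReal.ofReal (Real.exp (-s * E)) *
          ∫⁻ x, ENNReal.ofReal (Real.sqrt (max (E - x) 0)) ∂μ :=
        lintegral_const_mul' _ _ ENNReal.ofReal_ne_top
    _ = ENNReal.ofReal (Real.exp (-s * E)) *
          ENNReal.ofReal (∫ x, Real.sqrt (max (E - x) 0) ∂μ) := by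
        rw [ofReal_integral_eq_lintegral_ofReal
          (stmt5supp_integrable μ hμ (by fun_prop))
          (Eventually.of_forall fun x => Real.sqrt_nonneg _)]

lemma stmt5mass_lim {c d : ℝ} (μ : Measure ℝ) [IsFiniteMeasure μ]
    (hμ : μ (Set.Icc c d)ᶜ = 0) :
    Tendsto (fun n : ℕ => ∫⁻ x, ENNReal.ofReal (Real.exp (-(1/((n:ℝ)+1)) * x)) ∂μ)
      atTop (𝓝 (μ Set.univ)) := by
  have h1 : μ Set.univ = ∫⁻ _ : ℝ, (1 : ℝ≥0∞) ∂μ := by simp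
  rw [h1]
  apply tendsto_lintegral_of_dominated_convergence
    (bound := fun _ => ENNReal.ofReal (Real.exp (max |c| |d|)))
  · intro n; fun_prop
  · intro n
    filter_upwards [stmt5ae_mem_Icc μ hμ] with x hx
    apply ENNReal.ofReal_le_ofReal
    apply Real.exp_le_exp.mpr
    have hn1 : (0:ℝ) < 1/((n:ℝ)+1) := by positivity
    have hn2 : 1/((n:ℝ)+1) ≤ 1 := by
      rw [div_le_one (by positivity)]; linarith [Nat.cast_nonneg (α := ℝ) n]
    have habs : |x| ≤ max |c| |d| := by
      rcases abs_cases x with ⟨hx1, _⟩ | ⟨hx1, _⟩ <;>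
        nlinarith [le_abs_self c, neg_abs_le c, le_abs_self d, neg_abs_le d,
          le_max_left |c| |d|, le_max_right |c| |d|, hx.1, hx.2]
    calc -(1/((n:ℝ)+1)) * x ≤ |x| := by
          rcases abs_cases x with ⟨hx1, hx2⟩ | ⟨hx1, hx2⟩ <;> nlinarith
      _ ≤ max |c| |d| := habs
  · simp only [lintegral_const]
    exact ENNReal.mul_ne_top ENNReal.ofReal_ne_top (measure_ne_top μ _)
  · apply Eventually.of_forall
    intro x
    have key : Tendsto (fun n : ℕ => -(1/((n:ℝ)+1)) * x) atTop (𝓝 0) := by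
      have := tendsto_one_div_add_atTop_nhds_zero_nat (𝕜 := ℝ)
      have h2 := ((this.neg).mul_const x)
      simpa using h2
    have h3 := (ENNReal.continuous_ofReal.tendsto _).comp
      ((Real.continuous_exp.tendsto _).comp key)
    simpa [Function.comp_def] using h3

end Stmt5Aux

/-- Injectivity of the half-power Abel transform on finite measures supported
in `[c,d]`: if `∫ √((E - x)₊) dμ = ∫ √((E - x)₊) dν` for all `E ∈ ℝ`, then `μ = ν`. -/
theorem stmt_5 (c d : ℝ) (hcd : c < d)
    (μ ν : Measure ℝ) [IsFiniteMeasure μ] [IsFiniteMeasure ν]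
    (hμ : μ (Set.Icc c d)ᶜ = 0) (hν : ν (Set.Icc c d)ᶜ = 0)
    (h : ∀ E : ℝ,
      (∫ x, Real.sqrt (max (E - x) 0) ∂μ) = ∫ x, Real.sqrt (max (E - x) 0) ∂ν) :
    μ = ν := by
  classical
  open Real Set Filter in
  open scoped ENNReal Topology in
  -- Step 1: equality of Laplace transforms for all s > 0
  have laplace : ∀ s : ℝ, 0 < s →
      (∫⁻ x, ENNReal.ofReal (Real.exp (-s * x)) ∂μ) =
        ∫⁻ x, ENNReal.ofReal (Real.exp (-s * x)) ∂ν := by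
    intro s hs
    have h1 := stmt5laplace_step μ hμ s
    have h2 := stmt5laplace_step ν hν s
    simp_rw [h] at h1
    rw [← h2] at h1
    exact (ENNReal.mul_left_inj (stmt5absC_ne_zero hs) (stmt5absC_ne_top hs)).mp h1
  -- Step 2: equality of total masses
  have mass : μ Set.univ = ν Set.univ := by
    have l1 := stmt5mass_lim μ hμ
    have l2 := stmt5mass_lim ν hν
    have heq : (fun n : ℕ => ∫⁻ x, ENNReal.ofReal (Real.exp (-(1/((n:ℝ)+1)) * x)) ∂μ) =
        fun n : ℕ => ∫⁻ x, ENNReal.ofReal (Real.exp (-(1/((n:ℝ)+1)) * x)) ∂ν := by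
      funext n
      exact laplace _ (by positivity)
    rw [heq] at l1
    exact tendsto_nhds_unique l1 l2
  -- Step 3: real integrals of exp(-x)^n agree
  have expn : ∀ n : ℕ, (∫ x, Real.exp (-x) ^ n ∂μ) = ∫ x, Real.exp (-x) ^ n ∂ν := by
    intro n
    have hrw : ∀ x : ℝ, Real.exp (-x) ^ n = Real.exp (-(n:ℝ) * x) := by
      intro x
      rw [← Real.exp_nat_mul]
      ring_nf
    rcases Nat.eq_zero_or_pos n with hn | hn
    · subst hn
      simp only [pow_zero, integral_const, smul_eq_mul, mul_one]
      rw [measureReal_def, measureReal_def, mass]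
    · have hs : (0:ℝ) < n := by exact_mod_cast hn
      have key := laplace (n:ℝ) hs
      have i1 : Integrable (fun x => Real.exp (-(n:ℝ) * x)) μ :=
        stmt5supp_integrable μ hμ (by fun_prop)
      have i2 : Integrable (fun x => Real.exp (-(n:ℝ) * x)) ν :=
        stmt5supp_integrable ν hν (by fun_prop)
      have e1 := ofReal_integral_eq_lintegral_ofReal i1
        (Filter.Eventually.of_forall fun x => (Real.exp_nonneg _))
      have e2 := ofReal_integral_eq_lintegral_ofReal i2
        (Filter.Eventually.of_forall fun x => (Real.exp_nonneg _))
      have : ENNReal.ofReal (∫ x, Real.exp (-(n:ℝ) * x) ∂μ) =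
          ENNReal.ofReal (∫ x, Real.exp (-(n:ℝ) * x) ∂ν) := by
        rw [e1, e2]; exact key
      have h1 : (∫ x, Real.exp (-(n:ℝ) * x) ∂μ) = ∫ x, Real.exp (-(n:ℝ) * x) ∂ν := by
        have n1 : 0 ≤ ∫ x, Real.exp (-(n:ℝ) * x) ∂μ :=
          integral_nonneg fun x => Real.exp_nonneg _
        have n2 : 0 ≤ ∫ x, Real.exp (-(n:ℝ) * x) ∂ν :=
          integral_nonneg fun x => Real.exp_nonneg _
        rwa [ENNReal.ofReal_eq_ofReal_iff n1 n2] at this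
      simpa only [hrw] using h1
  -- Step 4: integrals of polynomials in exp(-x) agree
  have poly : ∀ p : Polynomial ℝ,
      (∫ x, p.eval (Real.exp (-x)) ∂μ) = ∫ x, p.eval (Real.exp (-x)) ∂ν := by
    intro p
    induction p using Polynomial.induction_on' with
    | add p q hp hq =>
      have ip1 : Integrable (fun x => p.eval (Real.exp (-x))) μ :=
        stmt5supp_integrable μ hμ (p.continuous.comp (by fun_prop))
      have iq1 : Integrable (fun x => q.eval (Real.exp (-x))) μ :=
        stmt5supp_integrable μ hμ (q.continuous.comp (by fun_prop))
      have ip2 : Integrable (fun x => p.eval (Real.exp (-x))) ν :=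
        stmt5supp_integrable ν hν (p.continuous.comp (by fun_prop))
      have iq2 : Integrable (fun x => q.eval (Real.exp (-x))) ν :=
        stmt5supp_integrable ν hν (q.continuous.comp (by fun_prop))
      simp only [Polynomial.eval_add]
      rw [integral_add ip1 iq1, integral_add ip2 iq2, hp, hq]
    | monomial n a =>
      simp only [Polynomial.eval_monomial]
      rw [integral_const_mul, integral_const_mul, expn n]
  -- Step 5: conclude via bounded continuous functions
  apply ext_of_forall_lintegral_eq_of_IsFiniteMeasure
  intro f
  set g : ℝ → ℝ := fun x => (f x : ℝ) with hg_def
  have hg : Continuous g := NNReal.continuous_coe.comp f.continuous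
  have hg0 : ∀ x, 0 ≤ g x := fun x => (f x).2
  have ig1 : Integrable g μ := stmt5supp_integrable μ hμ hg
  have ig2 : Integrable g ν := stmt5supp_integrable ν hν hg
  have Hreal : (∫ x, g x ∂μ) = ∫ x, g x ∂ν := by
    set A := ∫ x, g x ∂μ
    set B := ∫ x, g x ∂ν
    set Kμ := (μ Set.univ).toReal
    set Kν := (ν Set.univ).toReal
    have hKμ : 0 ≤ Kμ := ENNReal.toReal_nonneg
    have hKν : 0 ≤ Kν := ENNReal.toReal_nonneg
    have key : ∀ ε : ℝ, 0 < ε → |A - B| ≤ ε * (Kμ + Kν) := by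
      intro ε hε
      -- Weierstrass approximation of g ∘ (-log) on [exp(-d), exp(-c)]
      have hsub : Set.Icc (Real.exp (-d)) (Real.exp (-c)) ⊆ {(0:ℝ)}ᶜ := by
        intro y hy
        simp only [Set.mem_compl_iff, Set.mem_singleton_iff]
        have h1 := hy.1
        have h2 := Real.exp_pos (-d)
        intro hy0
        rw [hy0] at h1
        linarith
      have hF : ContinuousOn (fun y => g (-Real.log y))
          (Set.Icc (Real.exp (-d)) (Real.exp (-c))) :=
        hg.comp_continuousOn ((Real.continuousOn_log.mono hsub).neg)
      obtain ⟨p, hp⟩ := exists_polynomial_near_of_continuousOn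
        (Real.exp (-d)) (Real.exp (-c)) _ hF ε hε
      set q : ℝ → ℝ := fun x => p.eval (Real.exp (-x)) with hq_def
      have hq_cont : Continuous q := p.continuous.comp (by fun_prop)
      have hq_close : ∀ x ∈ Set.Icc c d, |q x - g x| ≤ ε := by
        intro x hx
        have hmem : Real.exp (-x) ∈ Set.Icc (Real.exp (-d)) (Real.exp (-c)) := by
          constructor
          · exact Real.exp_le_exp.mpr (by linarith [hx.2])
          · exact Real.exp_le_exp.mpr (by linarith [hx.1])
        have := hp _ hmem
        rw [Real.log_exp, neg_neg] at this
        exact this.le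
      have iq1 : Integrable q μ := stmt5supp_integrable μ hμ hq_cont
      have iq2 : Integrable q ν := stmt5supp_integrable ν hν hq_cont
      have hqint : (∫ x, q x ∂μ) = ∫ x, q x ∂ν := poly p
      have b1 : |A - ∫ x, q x ∂μ| ≤ ε * Kμ := by
        have : A - (∫ x, q x ∂μ) = ∫ x, (g x - q x) ∂μ := (integral_sub ig1 iq1).symm
        rw [this]
        have := norm_integral_le_of_norm_le_const (μ := μ) (C := ε)
          (f := fun x => g x - q x) ?_
        · simpa [Real.norm_eq_abs, mul_comm, Kμ, measureReal_def] using this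
        · filter_upwards [stmt5ae_mem_Icc μ hμ] with x hx
          rw [Real.norm_eq_abs, abs_sub_comm]
          exact hq_close x hx
      have b2 : |(∫ x, q x ∂ν) - B| ≤ ε * Kν := by
        have : (∫ x, q x ∂ν) - B = ∫ x, (q x - g x) ∂ν := (integral_sub iq2 ig2).symm
        rw [this]
        have := norm_integral_le_of_norm_le_const (μ := ν) (C := ε)
          (f := fun x => q x - g x) ?_
        · simpa [Real.norm_eq_abs, mul_comm, Kν, measureReal_def] using this
        · filter_upwards [stmt5ae_mem_Icc ν hν] with x hx
          rw [Real.norm_eq_abs]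
          exact hq_close x hx
      calc |A - B| = |(A - ∫ x, q x ∂μ) + ((∫ x, q x ∂μ) - (∫ x, q x ∂ν))
            + ((∫ x, q x ∂ν) - B)| := by ring_nf
        _ ≤ |A - ∫ x, q x ∂μ| + |(∫ x, q x ∂μ) - (∫ x, q x ∂ν)| + |(∫ x, q x ∂ν) - B| := by
            exact (abs_add_three _ _ _)
        _ = |A - ∫ x, q x ∂μ| + 0 + |(∫ x, q x ∂ν) - B| := by rw [hqint]; simp
        _ ≤ ε * Kμ + 0 + ε * Kν := by gcongr
        _ = ε * (Kμ + Kν) := by ring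
    have habs : |A - B| ≤ 0 := by
      apply le_of_forall_pos_le_add
      intro ε hε
      have hδ : 0 < ε / (Kμ + Kν + 1) := by positivity
      have := key _ hδ
      calc |A - B| ≤ ε / (Kμ + Kν + 1) * (Kμ + Kν) := this
        _ ≤ 0 + ε := by
            rw [zero_add, div_mul_eq_mul_div, div_le_iff₀ (by positivity)]
            nlinarith
    have : |A - B| = 0 := le_antisymm habs (abs_nonneg _)
    have := abs_eq_zero.mp this
    linarith
  -- convert to lintegral equality
  have e1 := ofReal_integral_eq_lintegral_ofReal ig1
    (Filter.Eventually.of_forall fun x => hg0 x)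
  have e2 := ofReal_integral_eq_lintegral_ofReal ig2
    (Filter.Eventually.of_forall fun x => hg0 x)
  have : (∫⁻ x, ENNReal.ofReal (g x) ∂μ) = ∫⁻ x, ENNReal.ofReal (g x) ∂ν := by
    rw [← e1, ← e2, Hreal]
  simpa only [hg_def, ENNReal.ofReal_coe_nnreal] using this
end
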